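/- Fix n ≥ 1 and an integer k ≥ 1. Let S ⊆ T be finite subtrees of ℕ^{≤n}, both of height n (every maximal element has length n). Then for every coloring of the copies of S inside ℕ^{≤n} with k colors, there is a copy T̃ of T inside ℕ^{≤n} such that all copies of S contained in T̃ receive the same color. -/

import Mathlib

/-- The lexicographical ordering on `ℕ^{≤n}` (finite sequences of naturals): levels
ordered by height first, then lexicographically by the first coordinate of
disagreement. -/
def lexLt (s t : List ℕ) : Prop :=
  s.length < t.length ∨ (s.length = t.length ∧ List.Lex (· < ·) s t)

theorem listLex_iff {x y : List ℕ} : x < y ↔ List.Lex (· < ·) x y := Iff.rfl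

theorem lexLt_irrefl (s : List ℕ) : ¬ lexLt s s := by
  rintro (h | ⟨-, h⟩)
  · omega
  · exact lt_irrefl _ (listLex_iff.mpr h)

theorem lexLt_trans {a b c : List ℕ} (h1 : lexLt a b) (h2 : lexLt b c) : lexLt a c := by
  rcases h1 with h1 | ⟨e1, h1⟩ <;> rcases h2 with h2 | ⟨e2, h2⟩
  · exact Or.inl (h1.trans h2)
  · exact Or.inl (e2 ▸ h1)
  · exact Or.inl (e1 ▸ h2)
  · exact Or.inr ⟨e1.trans e2, listLex_iff.mp (lt_trans (listLex_iff.mpr h1) (listLex_iff.mpr h2))⟩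

theorem lexLt_trichotomy (s t : List ℕ) : lexLt s t ∨ s = t ∨ lexLt t s := by
  rcases Nat.lt_trichotomy s.length t.length with h | h | h
  · exact Or.inl (Or.inl h)
  · rcases lt_trichotomy s t with h' | h' | h'
    · exact Or.inl (Or.inr ⟨h, listLex_iff.mp h'⟩)
    · exact Or.inr (Or.inl h')
    · exact Or.inr (Or.inr (Or.inr ⟨h.symm, listLex_iff.mp h'⟩))
  · exact Or.inr (Or.inr (Or.inl h))

theorem lexLt_asymm {s t : List ℕ} (h : lexLt s t) : ¬ lexLt t s :=
  fun h' => lexLt_irrefl s (lexLt_trans h h')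

theorem lex_iff_exists : ∀ (x y : List ℕ), x.length = y.length →
    (List.Lex (· < ·) x y ↔ ∃ i, ∃ h1 : i < x.length, ∃ h2 : i < y.length,
      x.take i = y.take i ∧ x[i] < y[i])
  | [], [], _ => by
      simp only [List.length_nil]
      constructor
      · intro h; cases h
      · rintro ⟨i, h1, -⟩; omega
  | [], b :: y, h => by simp at h
  | a :: x, [], h => by simp at h
  | a :: x, b :: y, h => by
      simp only [List.length_cons, Nat.succ_inj] at h
      constructor
      · intro hl
        cases hl with
        | rel hab => exact ⟨0, by simp, by simp, by simp, by simpa using hab⟩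
        | cons htail =>
            obtain ⟨i, h1, h2, ht, hg⟩ := (lex_iff_exists x y h).mp htail
            exact ⟨i + 1, by simpa using h1, by simpa using h2,
              by simpa [List.take_succ_cons] using ht, by simpa using hg⟩
      · rintro ⟨i, h1, h2, ht, hg⟩
        cases i with
        | zero => exact List.Lex.rel (by simpa using hg)
        | succ i =>
            simp only [List.take_succ_cons, List.cons.injEq] at ht
            obtain ⟨rfl, ht⟩ := ht
            refine List.Lex.cons ?_
            exact (lex_iff_exists x y h).mpr ⟨i, by simpa using h1, by simpa using h2, ht, by simpa using hg⟩


theorem myRamsey (k : ℕ) : ∀ (r : ℕ) (M : Set ℕ), M.Infinite → ∀ C : Finset ℕ → Fin k,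
    ∃ H : Set ℕ, H ⊆ M ∧ H.Infinite ∧ ∃ c : Fin k,
      ∀ E : Finset ℕ, ↑E ⊆ H → E.card = r → C E = c := by
  intro r
  induction r with
  | zero =>
      intro M hM C
      refine ⟨M, subset_rfl, hM, C ∅, ?_⟩
      intro E _ hE
      rw [Finset.card_eq_zero.mp hE]
  | succ r ih =>
      intro M hM C
      have step : ∀ M' : Set ℕ, M'.Infinite →
          ∃ q : ℕ × Fin k × Set ℕ, q.1 ∈ M' ∧ q.2.2 ⊆ M' ∧ (∀ x ∈ q.2.2, q.1 < x) ∧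
            q.2.2.Infinite ∧
            ∀ E : Finset ℕ, ↑E ⊆ q.2.2 → E.card = r → C (insert q.1 E) = q.2.1 := by
        intro M' hM'
        have hne : M'.Nonempty := hM'.nonempty
        have haM : sInf M' ∈ M' := Nat.sInf_mem hne
        have heq : M' \ Set.Iic (sInf M') = {x ∈ M' | sInf M' < x} := by
          ext x; simp [Set.mem_Iic, not_le]
        have hM'' : {x ∈ M' | sInf M' < x}.Infinite := by
          rw [← heq]; exact hM'.diff (Set.finite_Iic _)
        obtain ⟨H, hHsub, hHinf, c, hc⟩ := ih {x ∈ M' | sInf M' < x} hM''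
          (fun E => C (insert (sInf M') E))
        exact ⟨(sInf M', c, H), haM, fun x hx => (hHsub hx).1, fun x hx => (hHsub hx).2,
          hHinf, hc⟩
      choose q hq1 hq2 hq3 hq4 hq5 using step
      let g : ℕ → {M' : Set ℕ // M'.Infinite} :=
        fun i => Nat.rec ⟨M, hM⟩ (fun _ prev => ⟨(q prev.1 prev.2).2.2, hq4 prev.1 prev.2⟩) i
      set a : ℕ → ℕ := fun i => (q (g i).1 (g i).2).1 with ha
      set cf : ℕ → Fin k := fun i => (q (g i).1 (g i).2).2.1 with hcf
      have hg0 : (g 0).1 = M := rfl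
      have hgsucc : ∀ i, (g (i+1)).1 = (q (g i).1 (g i).2).2.2 := fun i => rfl
      have haMem : ∀ i, a i ∈ (g i).1 := fun i => hq1 _ _
      have hsub : ∀ i, (g (i+1)).1 ⊆ (g i).1 := fun i => hq2 _ _
      have hgt : ∀ i, ∀ x ∈ (g (i+1)).1, a i < x := fun i => hq3 _ _
      have hom : ∀ i, ∀ E : Finset ℕ, ↑E ⊆ (g (i+1)).1 → E.card = r →
          C (insert (a i) E) = cf i := fun i => hq5 _ _
      have chain : ∀ i d, (g (i + d)).1 ⊆ (g i).1 := by
        intro i d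
        induction d with
        | zero => exact subset_rfl
        | succ d ihd => exact (hsub (i + d)).trans ihd
      have chain' : ∀ i j, i ≤ j → (g j).1 ⊆ (g i).1 := by
        intro i j hij
        obtain ⟨d, rfl⟩ := Nat.exists_eq_add_of_le hij
        exact chain i d
      have amono : StrictMono a := by
        have key : ∀ i j, i < j → a i < a j := by
          intro i j hij
          exact hgt i (a j) (chain' (i+1) j hij (haMem j))
        exact fun i j hij => key i j hij
      obtain ⟨y, hy⟩ := Finite.exists_infinite_fiber cf
      have hI : (cf ⁻¹' {y}).Infinite := Set.infinite_coe_iff.mp hy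
      refine ⟨a '' (cf ⁻¹' {y}), ?_, hI.image (amono.injective.injOn), y, ?_⟩
      · rintro x ⟨i, -, rfl⟩
        exact hg0 ▸ chain' 0 i (Nat.zero_le i) (haMem i)
      · intro E hE hcard
        have hne : E.Nonempty := Finset.card_pos.mp (by omega)
        obtain ⟨i, hiI, hia⟩ := hE (E.min'_mem hne)
        have hE' : ↑(E.erase (E.min' hne)) ⊆ (g (i+1)).1 := by
          intro x hx
          have hxE : x ∈ E := Finset.mem_of_mem_erase hx
          obtain ⟨j, hjI, hja⟩ := hE hxE
          have hxgt : a i < x := by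
            rw [hia]
            exact lt_of_le_of_ne (E.min'_le x hxE) (Ne.symm (Finset.ne_of_mem_erase hx))
          have hij : i < j := by
            by_contra hcon
            push_neg at hcon
            rw [← hja] at hxgt
            exact absurd (amono.lt_iff_lt.mp hxgt) (by omega)
          rw [← hja]
          exact chain' (i+1) j hij (haMem j)
        have hcard' : (E.erase (E.min' hne)).card = r := by
          rw [Finset.card_erase_of_mem (E.min'_mem hne), hcard]; omega
        calc C E = C (insert (a i) (E.erase (E.min' hne))) := by
              rw [hia, Finset.insert_erase (E.min'_mem hne)]
          _ = cf i := hom i _ hE' hcard'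
          _ = y := hiI

open Classical in
noncomputable def rnk (X : Finset (List ℕ)) (u : List ℕ) : ℕ :=
  (X.filter (fun w => lexLt w u)).card

theorem rnk_lt {X : Finset (List ℕ)} {u w : List ℕ} (hu : u ∈ X) (hw : w ∈ X)
    (h : lexLt u w) : rnk X u < rnk X w := by
  classical
  unfold rnk
  apply Finset.card_lt_card
  rw [Finset.ssubset_iff_of_subset]
  · exact ⟨u, by simp [hu, h], by simp [lexLt_irrefl u]⟩
  · intro x hx
    simp only [Finset.mem_filter] at hx ⊢
    exact ⟨hx.1, lexLt_trans hx.2 h⟩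

theorem rnk_lt_card {X : Finset (List ℕ)} {u : List ℕ} (hu : u ∈ X) : rnk X u < X.card := by
  classical
  unfold rnk
  apply Finset.card_lt_card
  rw [Finset.ssubset_iff_of_subset (Finset.filter_subset _ _)]
  exact ⟨u, hu, by simp [lexLt_irrefl u]⟩

def emb (v : List ℕ → ℕ) (u : List ℕ) : List ℕ :=
  (List.range u.length).map (fun j => v (u.take (j+1)))

theorem emb_length (v : List ℕ → ℕ) (u : List ℕ) : (emb v u).length = u.length := by
  simp [emb]


theorem take_ne_nil' {u : List ℕ} {j : ℕ} (h : j < u.length) : u.take (j+1) ≠ [] := by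
  intro hc
  have := congrArg List.length hc
  simp only [List.length_take, List.length_nil] at this
  omega

theorem emb_getElem (v : List ℕ → ℕ) (u : List ℕ) (j : ℕ) (h : j < u.length) :
    (emb v u)[j]'(by rw [emb_length]; exact h) = v (u.take (j+1)) := by
  simp [emb]

theorem emb_take (v : List ℕ → ℕ) (u : List ℕ) (i : ℕ) (hi : i ≤ u.length) :
    (emb v u).take i = emb v (u.take i) := by
  have hlen : (u.take i).length = i := by rw [List.length_take]; omega
  apply List.ext_getElem
  · rw [List.length_take, emb_length, emb_length, hlen]; omega
  · intro j h1 h2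
    have hji : j < i := by rwa [emb_length, hlen] at h2
    have hju : j < u.length := by omega
    rw [List.getElem_take]
    rw [emb_getElem v u j hju, emb_getElem v (u.take i) j (by omega : j < (u.take i).length)]
    rw [List.take_take]
    congr 2
    omega

section EmbProps

variable {X : Set (List ℕ)} {v : List ℕ → ℕ}
  (hcl : ∀ u ∈ X, ∀ i : ℕ, u.take i ∈ X)
  (hmono : ∀ u ∈ X, ∀ w ∈ X, u ≠ [] → w ≠ [] → lexLt u w → v u < v w)

include hmono in
theorem v_inj {u w : List ℕ} (hu : u ∈ X) (hw : w ∈ X) (hu' : u ≠ []) (hw' : w ≠ [])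
    (h : v u = v w) : u = w := by
  rcases lexLt_trichotomy u w with h' | rfl | h'
  · exact absurd (hmono u hu w hw hu' hw' h') (by omega)
  · rfl
  · exact absurd (hmono w hw u hu hw' hu' h') (by omega)

include hcl hmono in
theorem emb_inj {u w : List ℕ} (hu : u ∈ X) (hw : w ∈ X) (h : emb v u = emb v w) : u = w := by
  have hlen : u.length = w.length := by
    have := congrArg List.length h
    simpa [emb_length] using this
  have htk : ∀ j, j < u.length → u.take (j+1) = w.take (j+1) := by
    intro j hj
    have hjw : j < w.length := by omega
    have e1 := emb_getElem v u j hj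
    have e2 := emb_getElem v w j hjw
    have e3 : (emb v u)[j]'(by rw [emb_length]; exact hj)
        = (emb v w)[j]'(by rw [emb_length]; exact hjw) := List.getElem_of_eq h _
    rw [e1, e2] at e3
    exact v_inj hmono (hcl u hu (j+1)) (hcl w hw (j+1)) (take_ne_nil' hj) (take_ne_nil' hjw) e3
  rcases Nat.eq_zero_or_pos u.length with h0 | h0
  · rw [List.length_eq_zero_iff.mp h0, List.length_eq_zero_iff.mp (hlen ▸ h0 : w.length = 0)]
  · have := htk (u.length - 1) (by omega)
    rwa [show u.length - 1 + 1 = u.length by omega, List.take_length,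
      show u.length = w.length from hlen, List.take_length] at this

include hcl hmono in
theorem emb_prefix {u w : List ℕ} (hu : u ∈ X) (hw : w ∈ X) :
    u <+: w ↔ emb v u <+: emb v w := by
  constructor
  · intro h
    have hle : u.length ≤ w.length := h.length_le
    have heq : u = w.take u.length := List.prefix_iff_eq_take.mp h
    calc emb v u = (emb v w).take u.length := by rw [emb_take v w u.length hle, ← heq]
    _ <+: emb v w := List.take_prefix _ _
  · intro h
    have hle : u.length ≤ w.length := by
      have := h.length_le; rwa [emb_length, emb_length] at this
    have h1 : emb v u = (emb v w).take u.length := by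
      have := List.prefix_iff_eq_take.mp h
      rwa [emb_length] at this
    rw [emb_take v w u.length hle] at h1
    rw [emb_inj hcl hmono hu (hcl w hw u.length) h1]
    exact List.take_prefix _ _

include hcl hmono in
theorem emb_lexLt {u w : List ℕ} (hu : u ∈ X) (hw : w ∈ X) :
    lexLt u w ↔ lexLt (emb v u) (emb v w) := by
  have fwd : ∀ u' ∈ X, ∀ w' ∈ X, lexLt u' w' → lexLt (emb v u') (emb v w') := by
    intro u' hu' w' hw' h
    rcases h with h | ⟨hlen, hlex⟩
    · exact Or.inl (by rw [emb_length, emb_length]; exact h)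
    · refine Or.inr ⟨by rw [emb_length, emb_length]; exact hlen, ?_⟩
      obtain ⟨i, h1, h2, ht, hg⟩ := (lex_iff_exists u' w' hlen).mp hlex
      refine (lex_iff_exists _ _ (by rw [emb_length, emb_length]; exact hlen)).mpr
        ⟨i, by rwa [emb_length], by rwa [emb_length], ?_, ?_⟩
      · rw [emb_take v u' i (le_of_lt h1), emb_take v w' i (le_of_lt h2), ht]
      · rw [emb_getElem v u' i h1, emb_getElem v w' i h2]
        apply hmono _ (hcl u' hu' (i+1)) _ (hcl w' hw' (i+1)) (take_ne_nil' h1) (take_ne_nil' h2)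
        refine Or.inr ⟨by rw [List.length_take, List.length_take]; omega, ?_⟩
        refine (lex_iff_exists _ _ (by rw [List.length_take, List.length_take]; omega)).mpr
          ⟨i, ?_, ?_, ?_, ?_⟩
        · rw [List.length_take]; omega
        · rw [List.length_take]; omega
        · rw [List.take_take, List.take_take]
          simpa [Nat.min_def] using ht
        · simpa [List.getElem_take] using hg
  constructor
  · exact fwd u hu w hw
  · intro h
    rcases lexLt_trichotomy u w with h' | rfl | h'
    · exact h'
    · exact absurd h (lexLt_irrefl _)
    · exact absurd h (lexLt_asymm (fwd w hw u hu h'))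

end EmbProps

theorem getD_countP : ∀ (L : List ℕ), L.Pairwise (· < ·) → ∀ x ∈ L,
    L.getD (L.countP (fun y => decide (y < x))) 0 = x := by
  intro L
  induction L with
  | nil => intro _ x hx; simp at hx
  | cons a L ihL =>
      intro hs x hx
      have ha : ∀ b ∈ L, a < b := fun _ hb => List.rel_of_pairwise_cons hs hb
      have hs' : L.Pairwise (· < ·) := hs.of_cons
      rcases List.mem_cons.mp hx with rfl | hx'
      · have hc : (x :: L).countP (fun y => decide (y < x)) = 0 := by
          rw [List.countP_eq_zero]
          intro b hb
          simp only [decide_eq_true_eq, not_lt]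
          rcases List.mem_cons.mp hb with rfl | hb'
          · exact le_rfl
          · exact le_of_lt (ha b hb')
        rw [hc]
        rfl
      · have hax : a < x := ha x hx'
        have hc : (a :: L).countP (fun y => decide (y < x))
            = L.countP (fun y => decide (y < x)) + 1 := by
          rw [List.countP_cons]
          simp [hax]
        rw [hc, List.getD_cons_succ]
        exact ihL hs' x hx'

theorem countP_toList (s : Finset ℕ) (p : ℕ → Bool) :
    s.toList.countP p = (s.filter (fun y => p y)).card := by
  classical
  induction s using Finset.induction_on with
  | empty => simp
  | @insert a s ha ih =>
      rw [(Finset.toList_insert ha).countP_eq, List.countP_cons, ih, Finset.filter_insert]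
      by_cases hp : p a
      · have : (if p a = true then insert a (Finset.filter (fun y => p y = true) s)
            else Finset.filter (fun y => p y = true) s)
            = insert a (Finset.filter (fun y => p y = true) s) := by
          split
          · rfl
          · simp_all
        rw [this, Finset.card_insert_of_notMem (fun hc => ha (Finset.mem_of_mem_filter a hc))]
        simp [hp]
      · have : (if p a = true then insert a (Finset.filter (fun y => p y = true) s)
            else Finset.filter (fun y => p y = true) s)
            = Finset.filter (fun y => p y = true) s := by
          split
          · simp_all
          · rfl
        rw [this]
        simp [hp]

theorem sort_rank (X : Finset (List ℕ)) (q : List ℕ → ℕ)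
    (hmono : ∀ u ∈ X, ∀ w ∈ X, lexLt u w → q u < q w) {u : List ℕ} (hu : u ∈ X) :
    ((X.image q).sort (· ≤ ·)).getD (rnk X u) 0 = q u := by
  classical
  set L := (X.image q).sort (· ≤ ·) with hL
  have hsorted : L.Pairwise (· < ·) := (Finset.sortedLT_sort _).pairwise
  have hmem : q u ∈ L := by
    rw [hL, Finset.mem_sort]
    exact Finset.mem_image_of_mem q hu
  have hqinj : Set.InjOn q ↑X := by
    intro a ha b hb hab
    rcases lexLt_trichotomy a b with h' | h' | h'
    · exact absurd (hmono a ha b hb h') (by omega)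
    · exact h'
    · exact absurd (hmono b hb a ha h') (by omega)
  have hcount : L.countP (fun y => decide (y < q u)) = rnk X u := by
    have hperm : List.Perm L (X.image q).toList := Finset.sort_perm_toList _ _
    rw [hperm.countP_eq, countP_toList]
    have himg : (X.image q).filter (fun y => (decide (y < q u) : Bool) = true)
        = (X.filter (fun w => lexLt w u)).image q := by
      ext y
      simp only [Finset.mem_filter, Finset.mem_image, decide_eq_true_eq]
      constructor
      · rintro ⟨⟨w, hwX, rfl⟩, hlt⟩
        refine ⟨w, ⟨hwX, ?_⟩, rfl⟩
        rcases lexLt_trichotomy w u with h' | rfl | h'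
        · exact h'
        · omega
        · exact absurd (hmono u hu w hwX h') (by omega)
      · rintro ⟨w, ⟨hwX, hlt⟩, rfl⟩
        exact ⟨⟨w, hwX, rfl⟩, hmono w hwX u hu hlt⟩
    rw [himg, Finset.card_image_of_injOn (hqinj.mono (fun x hx => by
      simp only [Finset.coe_filter, Set.mem_setOf_eq] at hx
      exact hx.1))]
    unfold rnk
    congr 1
  rw [← hcount]
  exact getD_countP L hsorted (q u) hmem


/-- `A` is a subtree of `ℕ^{≤n}` of height `n`: a set of sequences of length at most
`n`, closed under initial segments, all of whose maximal elements have length `n`. -/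
def IsSubtree (n : ℕ) (A : Set (List ℕ)) : Prop :=
  (∀ l ∈ A, l.length ≤ n) ∧
  (∀ l ∈ A, ∀ p : List ℕ, p <+: l → p ∈ A) ∧
  (∀ l ∈ A, (∀ m ∈ A, l <+: m → m = l) → l.length = n)

/-- `A` is a copy of `T` : there is a bijection from `T` onto `A` preserving (in both
directions) the initial-segment partial order and the lexicographical order. -/
def IsTreeCopy (T A : Set (List ℕ)) : Prop :=
  ∃ f : List ℕ → List ℕ, Set.BijOn f T A ∧
    (∀ s ∈ T, ∀ t ∈ T, (s <+: t ↔ f s <+: f t)) ∧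
    (∀ s ∈ T, ∀ t ∈ T, (lexLt s t ↔ lexLt (f s) (f t)))

theorem exists_leaf_ext {n : ℕ} {S : Set (List ℕ)} (hSfin : S.Finite) (hS : IsSubtree n S)
    {s : List ℕ} (hs : s ∈ S) : ∃ m ∈ S, s <+: m ∧ m.length = n := by
  classical
  set F := hSfin.toFinset.filter (fun m => s <+: m) with hF
  have hsF : s ∈ F := by
    simp only [hF, Finset.mem_filter, Set.Finite.mem_toFinset]
    exact ⟨hs, List.prefix_refl s⟩
  obtain ⟨m, hmF, hmax⟩ := F.exists_max_image (fun m => m.length) ⟨s, hsF⟩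
  simp only [hF, Finset.mem_filter, Set.Finite.mem_toFinset] at hmF
  refine ⟨m, hmF.1, hmF.2, ?_⟩
  apply hS.2.2 m hmF.1
  intro m' hm' hmm'
  have hm'F : m' ∈ F := by
    simp only [hF, Finset.mem_filter, Set.Finite.mem_toFinset]
    exact ⟨hm', hmF.2.trans hmm'⟩
  exact (List.IsPrefix.eq_of_length hmm'
    (le_antisymm hmm'.length_le (by simpa using hmax m' hm'F))).symm

/-- Ramsey theorem for finite subtrees of `ℕ^{≤n}` of height `n`, inside the full
tree `ℕ^{≤n}`: for every `k`-coloring of the copies of `S` in `ℕ^{≤n}` there is a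
copy of `T` inside which all copies of `S` get the same color. -/
theorem tree_ramsey_in_full_tree
    (n k : ℕ) (hn : 1 ≤ n) (hk : 1 ≤ k)
    (S T : Set (List ℕ)) (hST : S ⊆ T)
    (hSfin : S.Finite) (hTfin : T.Finite)
    (hS : IsSubtree n S) (hT : IsSubtree n T) :
    ∀ χ : Set (List ℕ) → Fin k,
      ∃ B : Set (List ℕ), (∀ l ∈ B, l.length ≤ n) ∧ IsTreeCopy T B ∧
        ∀ A₁ A₂ : Set (List ℕ),
          IsTreeCopy S A₁ → A₁ ⊆ B → IsTreeCopy S A₂ → A₂ ⊆ B → χ A₁ = χ A₂ := by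
  intro χ
  classical
  set Snr := hSfin.toFinset.erase ([] : List ℕ) with hSnr
  set r := Snr.card with hr
  set φS : Finset ℕ → Set (List ℕ) :=
    fun E => (emb (fun u => (E.sort (· ≤ ·)).getD (rnk Snr u) 0)) '' S with hφS
  obtain ⟨H, -, hHinf, c, hc⟩ := myRamsey k r Set.univ Set.infinite_univ (fun E => χ (φS E))
  haveI : Infinite ↥H := Set.infinite_coe_iff.mpr hHinf
  set e : ℕ → ℕ := fun i => ((Nat.Subtype.orderIsoOfNat H) i : ℕ) with he
  have he_mono : StrictMono e := fun i j hij => by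
    simp only [he]
    exact_mod_cast (Nat.Subtype.orderIsoOfNat H).strictMono hij
  have heH : ∀ i, e i ∈ H := fun i => ((Nat.Subtype.orderIsoOfNat H) i).2
  set Tnr := hTfin.toFinset.erase ([] : List ℕ) with hTnr
  set vT : List ℕ → ℕ := fun u => e (rnk Tnr u) with hvT
  have hclT : ∀ u ∈ T, ∀ i : ℕ, u.take i ∈ T := fun u hu i =>
    hT.2.1 u hu _ (List.take_prefix i u)
  have hclS : ∀ u ∈ S, ∀ i : ℕ, u.take i ∈ S := fun u hu i =>
    hS.2.1 u hu _ (List.take_prefix i u)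
  have hmonoT : ∀ u ∈ T, ∀ w ∈ T, u ≠ [] → w ≠ [] → lexLt u w → vT u < vT w := by
    intro u hu w hw hu' hw' hlt
    apply he_mono
    apply rnk_lt _ _ hlt
    · simp only [hTnr, Finset.mem_erase, Set.Finite.mem_toFinset]; exact ⟨hu', hu⟩
    · simp only [hTnr, Finset.mem_erase, Set.Finite.mem_toFinset]; exact ⟨hw', hw⟩
  have key : ∀ A : Set (List ℕ), IsTreeCopy S A → A ⊆ emb vT '' T →
      ∃ E : Finset ℕ, ↑E ⊆ H ∧ E.card = r ∧ A = φS E := by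
    intro A hA hAB
    obtain ⟨f, hbij, hpre, hlex⟩ := hA
    have hlen : ∀ s ∈ S, (f s).length = s.length := by
      intro s hsS
      obtain ⟨m, hmS, hsm, hmn⟩ := exists_leaf_ext hSfin hS hsS
      have hmtk : ∀ i : ℕ, m.take i ∈ S := fun i => hclS m hmS i
      have hfub : ∀ x ∈ S, (f x).length ≤ n := by
        intro x hx
        obtain ⟨u, hu, huf⟩ := hAB (hbij.1 hx)
        rw [← huf, emb_length]
        exact hT.1 u hu
      have hstep : ∀ i, i < n → (f (m.take i)).length < (f (m.take (i+1))).length := by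
        intro i hi
        have hpfx : m.take i <+: m.take (i+1) := by
          rw [show m.take i = (m.take (i+1)).take i by rw [List.take_take]; congr 1; omega]
          exact List.take_prefix _ _
        have hne : m.take i ≠ m.take (i+1) := by
          intro hcon
          have := congrArg List.length hcon
          rw [List.length_take, List.length_take] at this
          omega
        have himg : f (m.take i) <+: f (m.take (i+1)) :=
          (hpre _ (hmtk i) _ (hmtk (i+1))).mp hpfx
        have hneimg : f (m.take i) ≠ f (m.take (i+1)) := fun hcon =>
          hne (hbij.2.1 (hmtk i) (hmtk (i+1)) hcon)
        exact lt_of_le_of_ne himg.length_le (fun hl => hneimg (himg.eq_of_length hl))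
      have hlb : ∀ i, i ≤ n → i ≤ (f (m.take i)).length := by
        intro i
        induction i with
        | zero => intro _; omega
        | succ i ih =>
            intro hi
            have h1 := hstep i (by omega)
            have h2 := ih (by omega)
            omega
      have hub : ∀ d i, i + d ≤ n → (f (m.take i)).length + d ≤ (f (m.take (i+d))).length := by
        intro d
        induction d with
        | zero => intro i _; simp
        | succ d ih =>
            intro i hi
            have h1 := ih i (by omega)
            have h2 := hstep (i+d) (by omega)
            rw [show i + (d+1) = (i+d)+1 from rfl]
            omega
      have hfix : ∀ i, i ≤ n → (f (m.take i)).length = i := by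
        intro i hi
        have h1 := hlb i hi
        have h2 := hub (n - i) i (by omega)
        rw [show i + (n-i) = n by omega] at h2
        have h3 := hfub (m.take n) (hmtk n)
        omega
      have hslen : s.length ≤ n := hS.1 s hsS
      have hsm' : s = m.take s.length := List.prefix_iff_eq_take.mp hsm
      have h1 : (f (m.take s.length)).length = s.length := hfix s.length hslen
      rw [← hsm'] at h1
      exact h1
    have htake : ∀ s ∈ S, ∀ i, i ≤ s.length → f (s.take i) = (f s).take i := by
      intro s hsS i hi
      have h1 : f (s.take i) <+: f s := (hpre _ (hclS s hsS i) _ hsS).mp (List.take_prefix i s)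
      have h2 : (f (s.take i)).length = i := by
        rw [hlen _ (hclS s hsS i), List.length_take]; omega
      have h3 := List.prefix_iff_eq_take.mp h1
      rwa [h2] at h3
    set q : List ℕ → ℕ := fun s => (f s).getD (s.length - 1) 0 with hq
    have hval : ∀ s ∈ S, s ≠ [] → ∃ t ∈ T, t ≠ [] ∧ f s = emb vT t ∧ q s = vT t := by
      intro s hsS hs0
      obtain ⟨t, htT, hft⟩ := hAB (hbij.1 hsS)
      have hpos : 0 < s.length := List.length_pos_iff.mpr hs0
      have hlt : t.length = s.length := by rw [← hlen s hsS, ← hft, emb_length]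
      have ht0 : t ≠ [] := by
        intro hcon
        rw [hcon] at hlt
        simp only [List.length_nil] at hlt
        omega
      refine ⟨t, htT, ht0, hft.symm, ?_⟩
      simp only [hq]
      rw [← hft]
      rw [List.getD_eq_getElem _ _ (by rw [emb_length]; omega)]
      rw [emb_getElem vT t (s.length - 1) (by omega)]
      congr 1
      rw [show s.length - 1 + 1 = t.length by omega, List.take_length]
    have hqmono : ∀ u ∈ S, ∀ w ∈ S, u ≠ [] → w ≠ [] → lexLt u w → q u < q w := by
      intro u hu w hw hu0 hw0 hlt
      obtain ⟨t, htT, ht0, hft, hqt⟩ := hval u hu hu0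
      obtain ⟨t', ht'T, ht'0, hft', hqt'⟩ := hval w hw hw0
      rw [hqt, hqt']
      apply hmonoT t htT t' ht'T ht0 ht'0
      have h1 : lexLt (f u) (f w) := (hlex u hu w hw).mp hlt
      rw [hft, hft'] at h1
      exact (emb_lexLt hclT hmonoT htT ht'T).mpr h1
    have hSnrmem : ∀ u, u ∈ Snr ↔ u ∈ S ∧ u ≠ [] := by
      intro u
      simp only [hSnr, Finset.mem_erase, Set.Finite.mem_toFinset]
      tauto
    have hqmono' : ∀ u ∈ Snr, ∀ w ∈ Snr, lexLt u w → q u < q w := by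
      intro u hu w hw hlt
      obtain ⟨huS, hu0⟩ := (hSnrmem u).mp hu
      obtain ⟨hwS, hw0⟩ := (hSnrmem w).mp hw
      exact hqmono u huS w hwS hu0 hw0 hlt
    have hEcard : (Snr.image q).card = r := by
      rw [hr]
      apply Finset.card_image_of_injOn
      intro u hu w hw huw
      rcases lexLt_trichotomy u w with h' | h' | h'
      · exact absurd (hqmono' u hu w hw h') (by omega)
      · exact h'
      · exact absurd (hqmono' w hw u hu h') (by omega)
    have hEH : ↑(Snr.image q) ⊆ H := by
      intro x hx
      simp only [Finset.coe_image, Set.mem_image, Finset.mem_coe] at hx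
      obtain ⟨u, hu, rfl⟩ := hx
      obtain ⟨huS, hu0⟩ := (hSnrmem u).mp hu
      obtain ⟨t, htT, ht0, hft, hqt⟩ := hval u huS hu0
      rw [hqt]
      simp only [hvT]
      exact heH _
    refine ⟨Snr.image q, hEH, hEcard, ?_⟩
    rw [← hbij.image_eq]
    simp only [hφS]
    apply Set.image_congr
    intro s hsS
    apply List.ext_getElem
    · rw [hlen s hsS, emb_length]
    · intro j h1 h2
      have hjs : j < s.length := by rwa [hlen s hsS] at h1
      rw [emb_getElem _ s j hjs]
      have hmemtk : s.take (j+1) ∈ Snr := (hSnrmem _).mpr ⟨hclS s hsS (j+1), take_ne_nil' hjs⟩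
      have hqtk : (f s)[j]'h1 = q (s.take (j+1)) := by
        simp only [hq]
        rw [htake s hsS (j+1) (by omega)]
        have hlentk : ((s.take (j+1)).length) - 1 = j := by rw [List.length_take]; omega
        rw [hlentk]
        rw [List.getD_eq_getElem _ _ (by rw [List.length_take, hlen s hsS]; omega)]
        simp [List.getElem_take]
      rw [hqtk]
      exact (sort_rank Snr q hqmono' hmemtk).symm
  refine ⟨emb vT '' T, ?_, ⟨emb vT, ?_, ?_, ?_⟩, ?_⟩
  · rintro l ⟨u, hu, rfl⟩
    rw [emb_length]
    exact hT.1 u hu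
  · exact Set.InjOn.bijOn_image (fun u hu w hw h => emb_inj hclT hmonoT hu hw h)
  · exact fun s hs t ht => emb_prefix hclT hmonoT hs ht
  · exact fun s hs t ht => emb_lexLt hclT hmonoT hs ht
  · intro A₁ A₂ h1 h1B h2 h2B
    obtain ⟨E₁, hE₁H, hE₁c, rfl⟩ := key A₁ h1 h1B
    obtain ⟨E₂, hE₂H, hE₂c, rfl⟩ := key A₂ h2 h2B
    exact (hc E₁ (fun x hx => hE₁H hx) hE₁c).trans (hc E₂ (fun x hx => hE₂H hx) hE₂c).symm
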